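/- Let S have Laplace density (λ/2)e^{−λ|s|} with λ > 0, E ∼ N(0, N_T) independent of S, X = S + E, and Z ∼ N(0, τ) independent of (S, E) with τ > 0. Then the posterior mean of X given the observation ẑ = X + Z equals F(ẑ, τ) = ẑ + λτ·η(ẑ, τ) where η(ẑ, τ) = (erfcx(α) − erfcx(β))/(erfcx(α) + erfcx(β)), α = (ẑ + λ(N_T + τ))/√(2(N_T + τ)), β = (−ẑ + λ(N_T + τ))/√(2(N_T + τ)). -/

import Mathlib

open MeasureTheory Real Set Filter

/-- The standard Gaussian tail (complementary CDF) function. -/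
noncomputable def gaussQ (x : ℝ) : ℝ :=
  ∫ t in Set.Ioi x, (Real.sqrt (2 * Real.pi))⁻¹ * Real.exp (-(t ^ 2) / 2)

/-- Complementary error function `erfc(t) = 2 Q(√2 t)`. -/
noncomputable def erfc (t : ℝ) : ℝ := 2 * gaussQ (Real.sqrt 2 * t)

/-- Scaled complementary error function `erfcx(t) = e^{t²} erfc(t)`. -/
noncomputable def erfcx (t : ℝ) : ℝ := Real.exp (t ^ 2) * erfc t

/-- The Laplace–Gaussian convolution density of `X = S + E` (closed form). -/
noncomputable def laplaceGaussDensity (lam NT x : ℝ) : ℝ :=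
  lam / 2 * Real.exp (lam ^ 2 * NT / 2) *
    (Real.exp (lam * x) * gaussQ ((x + lam * NT) / Real.sqrt NT)
      + Real.exp (-lam * x) * (1 - gaussQ ((x - lam * NT) / Real.sqrt NT)))

/-- The ratio `η` appearing in the AMPI posterior mean. -/
noncomputable def etaFun (lam NT τ zhat : ℝ) : ℝ :=
  (erfcx ((zhat + lam * (NT + τ)) / Real.sqrt (2 * (NT + τ)))
    - erfcx ((-zhat + lam * (NT + τ)) / Real.sqrt (2 * (NT + τ))))
  / (erfcx ((zhat + lam * (NT + τ)) / Real.sqrt (2 * (NT + τ)))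
      + erfcx ((-zhat + lam * (NT + τ)) / Real.sqrt (2 * (NT + τ))))


namespace PMLG

/-- Gaussian density with variance `σ` and mean `m`. -/
noncomputable def g (σ m x : ℝ) : ℝ :=
  (Real.sqrt (2 * π * σ))⁻¹ * Real.exp (-(x - m) ^ 2 / (2 * σ))

lemma g_nonneg (σ m x : ℝ) : 0 ≤ g σ m x := by
  unfold g; positivity

lemma g_symm (σ m x : ℝ) : g σ m x = g σ x m := by
  unfold g; ring_nf

lemma g_neg_neg (σ m x : ℝ) : g σ (-m) (-x) = g σ m x := by
  unfold g; ring_nf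

lemma continuous_g (σ m : ℝ) : Continuous (g σ m) := by
  unfold g; fun_prop

lemma integrable_g {σ : ℝ} (hσ : 0 < σ) (m : ℝ) : Integrable (g σ m) := by
  have h : Integrable (fun x : ℝ => Real.exp (-(2 * σ)⁻¹ * x ^ 2)) :=
    integrable_exp_neg_mul_sq (by positivity)
  have := (h.comp_sub_right m).const_mul (Real.sqrt (2 * π * σ))⁻¹
  refine this.congr (Eventually.of_forall fun x => ?_)
  unfold g
  simp only [div_eq_mul_inv]; ring_nf

lemma integral_g {σ : ℝ} (hσ : 0 < σ) (m : ℝ) : ∫ x, g σ m x = 1 := by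
  rw [← integral_add_right_eq_self (g σ m) m]
  have h0 : ∀ x : ℝ, g σ m (x + m) = (Real.sqrt (2 * π * σ))⁻¹ * Real.exp (-(2*σ)⁻¹ * x ^ 2) := by
    intro x; unfold g; simp only [add_sub_cancel_right, div_eq_mul_inv]; ring_nf
  simp only [h0]
  rw [integral_const_mul, integral_gaussian]
  rw [show π / (2*σ)⁻¹ = 2 * π * σ by field_simp]
  rw [inv_mul_cancel₀]
  positivity

/-- First moment of Gaussian. -/
lemma integrable_id_g {σ : ℝ} (hσ : 0 < σ) (m : ℝ) :
    Integrable (fun x => x * g σ m x) := by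
  have h : Integrable (fun x : ℝ => x * Real.exp (-(2 * σ)⁻¹ * x ^ 2)) :=
    integrable_mul_exp_neg_mul_sq (by positivity)
  have h2 := ((h.comp_sub_right m).const_mul (Real.sqrt (2 * π * σ))⁻¹).add
    ((integrable_g hσ m).const_mul m)
  refine h2.congr (Eventually.of_forall fun x => ?_)
  simp only [Pi.add_apply]
  unfold g
  simp only [div_eq_mul_inv]; ring_nf

lemma integral_id_g {σ : ℝ} (hσ : 0 < σ) (m : ℝ) : ∫ x, x * g σ m x = m := by
  have h0 : ∀ x : ℝ, (x + m) * g σ m (x + m)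
      = x * (g σ 0 x) + m * g σ 0 x := by
    intro x; unfold g; ring_nf
  rw [← integral_add_right_eq_self (fun x => x * g σ m x) m]
  simp only [h0]
  have hodd : ∫ x : ℝ, x * g σ 0 x = 0 := by
    have hneg : (∫ x : ℝ, x * g σ 0 x) = - ∫ x : ℝ, x * g σ 0 x := by
      nth_rewrite 1 [← integral_neg_eq_self (fun x => x * g σ 0 x) volume]
      rw [← integral_neg]
      congr 1; ext x; unfold g; ring_nf
    linarith
  rw [integral_add ((integrable_id_g hσ 0).congr (Eventually.of_forall fun x => rfl))
    ((integrable_g hσ 0).const_mul m), hodd, integral_const_mul, integral_g hσ, zero_add, mul_one]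

end PMLG

namespace PMLG2
open PMLG

/-- Translation for integrals over `Ioi`. -/
lemma integral_Ioi_comp_add_right (f : ℝ → ℝ) (a c : ℝ) :
    ∫ x in Ioi a, f (x + c) = ∫ x in Ioi (a + c), f x := by
  have h1 : ∀ x : ℝ, (Ioi a).indicator (fun y => f (y + c)) x
      = (Ioi (a + c)).indicator f (x + c) := by
    intro x
    by_cases hx : x ∈ Ioi a
    · rw [indicator_of_mem hx, indicator_of_mem (by simpa using add_lt_add_right hx.out c)]
    · rw [indicator_of_notMem hx, indicator_of_notMem (by
        simp only [mem_Ioi, not_lt] at hx ⊢; exact add_le_add_left hx c)]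
  rw [← integral_indicator measurableSet_Ioi, ← integral_indicator measurableSet_Ioi]
  calc ∫ x, (Ioi a).indicator (fun y => f (y + c)) x
      = ∫ x, (Ioi (a + c)).indicator f (x + c) := by simp only [h1]
    _ = ∫ x, (Ioi (a + c)).indicator f x :=
      integral_add_right_eq_self ((Ioi (a + c)).indicator f) c

lemma integral_Ioi_g {σ : ℝ} (hσ : 0 < σ) (m a : ℝ) :
    ∫ x in Ioi a, g σ m x = gaussQ ((a - m) / Real.sqrt σ) := by
  have hs : (0:ℝ) < Real.sqrt σ := Real.sqrt_pos.mpr hσ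
  have key : ∀ x : ℝ, g σ m x
      = (Real.sqrt σ)⁻¹ * ((Real.sqrt (2 * π))⁻¹
          * Real.exp (-(((Real.sqrt σ)⁻¹ * (x - m)) ^ 2) / 2)) := by
    intro x
    have hinv : ((Real.sqrt σ)⁻¹)^2 = σ⁻¹ := by
      rw [← Real.sqrt_inv, Real.sq_sqrt (by positivity)]
    unfold g
    rw [mul_pow, hinv,
      show (2 * π * σ) = (2 * π) * σ by ring, Real.sqrt_mul (by positivity), mul_inv,
      mul_comm (Real.sqrt (2*π))⁻¹ (Real.sqrt σ)⁻¹, mul_assoc]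
    congr 2
    rw [div_eq_mul_inv, div_eq_mul_inv, mul_inv]
    ring
  simp only [key]
  rw [integral_const_mul]
  have h2 : ∀ x : ℝ, (Real.sqrt (2 * π))⁻¹ * Real.exp (-(((Real.sqrt σ)⁻¹ * (x - m)) ^ 2) / 2)
      = (fun y => (Real.sqrt (2 * π))⁻¹ * Real.exp (-(y ^ 2) / 2)) ((Real.sqrt σ)⁻¹ * (x + (-m))) := by
    intro x; rw [show x + (-m) = x - m by ring]
  simp only [h2]
  rw [integral_Ioi_comp_add_right
    (fun x => (fun y => (Real.sqrt (2 * π))⁻¹ * Real.exp (-(y ^ 2) / 2)) ((Real.sqrt σ)⁻¹ * x)) a (-m)]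
  rw [integral_comp_mul_left_Ioi (fun y => (Real.sqrt (2 * π))⁻¹ * Real.exp (-(y ^ 2) / 2)) _
    (inv_pos.mpr hs)]
  rw [inv_inv, smul_eq_mul, ← mul_assoc, inv_mul_cancel₀ (ne_of_gt hs), one_mul]
  rw [show (Real.sqrt σ)⁻¹ * (a + -m) = (a - m) / Real.sqrt σ by
    rw [sub_eq_add_neg, div_eq_inv_mul], gaussQ]

lemma gaussQ_eq_integral_g (x : ℝ) : gaussQ x = ∫ t in Ioi x, g 1 0 t := by
  rw [gaussQ]
  congr 1
  ext t
  unfold g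
  rw [sub_zero]
  norm_num

lemma gaussQ_pos (x : ℝ) : 0 < gaussQ x := by
  rw [gaussQ_eq_integral_g]
  have hint : IntegrableOn (g 1 0) (Ioi x) := (integrable_g one_pos 0).integrableOn
  rw [setIntegral_pos_iff_support_of_nonneg_ae
    (Eventually.of_forall fun t => g_nonneg 1 0 t) hint]
  have : Function.support (g 1 0) = univ := by
    ext t; simp only [Function.mem_support, mem_univ, iff_true]
    unfold g; positivity
  rw [this, univ_inter]
  simp [Real.volume_Ioi]

lemma gaussQ_neg_add (x : ℝ) : gaussQ (-x) + gaussQ x = 1 := by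
  have h1 : gaussQ (-x) = ∫ t in Iic x, g 1 0 t := by
    rw [gaussQ_eq_integral_g, ← integral_comp_neg_Iic x (g 1 0)]
    congr 1; ext t; rw [← g_neg_neg 1 0 t, neg_zero]
  rw [h1, gaussQ_eq_integral_g]
  rw [intervalIntegral.integral_Iic_add_Ioi (integrable_g one_pos 0).integrableOn
    (integrable_g one_pos 0).integrableOn]
  exact integral_g one_pos 0

end PMLG2

namespace PMLG3
open PMLG PMLG2

/-- Exponential tilting of a Gaussian density. -/
lemma exp_tilt {σ : ℝ} (hσ : 0 < σ) (c m s : ℝ) :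
    Real.exp (-(c * s)) * g σ m s
      = Real.exp (c ^ 2 * σ / 2 - c * m) * g σ (m - c * σ) s := by
  unfold g
  rw [mul_left_comm, ← Real.exp_add, mul_left_comm, ← Real.exp_add]
  congr 2
  field_simp
  ring

/-- `L0`: Laplace-transform-type integral of a Gaussian over a half line. -/
lemma L0 {σ : ℝ} (hσ : 0 < σ) (c m : ℝ) :
    ∫ s in Ioi (0:ℝ), Real.exp (-(c * s)) * g σ m s
      = Real.exp (c ^ 2 * σ / 2 - c * m) * gaussQ ((c * σ - m) / Real.sqrt σ) := by
  rw [setIntegral_congr_fun measurableSet_Ioi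
    (fun s _ => exp_tilt hσ c m s), integral_const_mul, integral_Ioi_g hσ]
  rw [show (0 : ℝ) - (m - c * σ) = c * σ - m by ring]

/-- FTC: first-moment tail integral of a Gaussian. -/
lemma gauss_tail {σ : ℝ} (hσ : 0 < σ) (m a : ℝ) :
    ∫ s in Ioi a, (s - m) * g σ m s = σ * g σ m a := by
  have hderiv : ∀ s ∈ Ioi a, HasDerivAt (fun s => -σ * g σ m s) ((s - m) * g σ m s) s := by
    intro s _
    have h1 : HasDerivAt (fun s : ℝ => -(s - m) ^ 2 / (2 * σ))
        (-(s - m) / σ) s := by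
      have : HasDerivAt (fun s : ℝ => s - m) 1 s := (hasDerivAt_id s).sub_const m
      have h2 := (this.pow 2).neg.div_const (2 * σ)
      refine h2.congr_deriv ?_
      field_simp
      ring
    have h3 := (h1.exp).const_mul ((Real.sqrt (2 * π * σ))⁻¹)
    have h4 := h3.const_mul (-σ)
    refine h4.congr_deriv ?_
    unfold g
    field_simp
  have hint : IntegrableOn (fun s => (s - m) * g σ m s) (Ioi a) := by
    have := ((integrable_id_g hσ m).sub ((integrable_g hσ m).const_mul m)).integrableOn
      (s := Ioi a)
    refine this.congr_fun (fun s _ => by simp only [Pi.sub_apply]; ring) measurableSet_Ioi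
  have htend : Tendsto (fun s => -σ * g σ m s) atTop (nhds 0) := by
    have h1 : Tendsto (fun s : ℝ => -(s - m) ^ 2 / (2 * σ)) atTop atBot := by
      apply Tendsto.atBot_div_const (by positivity)
      apply tendsto_neg_atBot_iff.mpr
      exact (tendsto_pow_atTop (two_ne_zero)).comp (tendsto_atTop_add_const_right _ (-m)
        (by exact tendsto_id))
    have h2 : Tendsto (fun s => g σ m s) atTop (nhds 0) := by
      have := (Real.tendsto_exp_atBot.comp h1).const_mul ((Real.sqrt (2 * π * σ))⁻¹)
      simpa [g, Function.comp] using this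
    have := h2.const_mul (-σ)
    simpa using this
  have hcont : ContinuousWithinAt (fun s => -σ * g σ m s) (Ici a) a :=
    (continuous_const.mul (continuous_g σ m)).continuousWithinAt
  have := integral_Ioi_of_hasDerivAt_of_tendsto hcont hderiv hint htend
  rw [this]
  ring

/-- `L1`: first-moment Laplace-transform-type integral. -/
lemma L1 {σ : ℝ} (hσ : 0 < σ) (c m : ℝ) :
    ∫ s in Ioi (0:ℝ), s * (Real.exp (-(c * s)) * g σ m s)
      = Real.exp (c ^ 2 * σ / 2 - c * m) * ((m - c * σ) * gaussQ ((c * σ - m) / Real.sqrt σ))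
        + σ * g σ m 0 := by
  have key : ∀ s : ℝ, s * (Real.exp (-(c * s)) * g σ m s)
      = Real.exp (c ^ 2 * σ / 2 - c * m) *
          ((s - (m - c * σ)) * g σ (m - c * σ) s + (m - c * σ) * g σ (m - c * σ) s) := by
    intro s
    rw [exp_tilt hσ c m s]
    ring
  rw [setIntegral_congr_fun measurableSet_Ioi (fun s _ => key s), integral_const_mul]
  have hint1 : IntegrableOn (fun s => (s - (m - c * σ)) * g σ (m - c * σ) s) (Ioi (0:ℝ)) := by
    have := ((integrable_id_g hσ (m - c*σ)).sub
      ((integrable_g hσ (m - c*σ)).const_mul (m - c*σ))).integrableOn (s := Ioi (0:ℝ))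
    refine this.congr_fun (fun s _ => by simp only [Pi.sub_apply]; ring) measurableSet_Ioi
  have hint2 : IntegrableOn (fun s => (m - c * σ) * g σ (m - c * σ) s) (Ioi (0:ℝ)) :=
    ((integrable_g hσ (m - c*σ)).const_mul (m - c*σ)).integrableOn
  rw [integral_add hint1 hint2, gauss_tail hσ, integral_const_mul, integral_Ioi_g hσ]
  have hg0 : Real.exp (c ^ 2 * σ / 2 - c * m) * g σ (m - c * σ) 0 = g σ m 0 := by
    unfold g
    rw [← mul_assoc, mul_comm (Real.exp _), mul_assoc, ← Real.exp_add]
    congr 2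
    field_simp
    ring
  rw [mul_add, show (0:ℝ) - (m - c * σ) = c * σ - m by ring]
  rw [show Real.exp (c ^ 2 * σ / 2 - c * m) * (σ * g σ (m - c*σ) 0)
    = σ * (Real.exp (c ^ 2 * σ / 2 - c * m) * g σ (m - c*σ) 0) by ring, hg0]
  ring

end PMLG3

namespace PMLG4
open PMLG PMLG2 PMLG3

variable {lam v : ℝ}

lemma q_g_integrableOn_halves (hlam : 0 < lam) (hv : 0 < v) (x : ℝ) (S : Set ℝ) :
    IntegrableOn (fun s => lam / 2 * Real.exp (-(lam * |s|)) * g v s x) S := by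
  apply IntegrableOn.mono_set (t := univ) _ (subset_univ S)
  rw [integrableOn_univ]
  have hb : Integrable (fun s => lam / 2 * g v x s) := (integrable_g hv x).const_mul _
  refine hb.mono' ?_ (Eventually.of_forall fun s => ?_)
  · apply Continuous.aestronglyMeasurable
    have : Continuous fun s : ℝ => g v s x := by unfold g; fun_prop
    fun_prop
  · have h1 : g v s x = g v x s := g_symm v s x
    have hexp : Real.exp (-(lam * |s|)) ≤ 1 := by
      rw [← Real.exp_zero]
      exact Real.exp_le_exp.mpr (neg_nonpos.mpr (by positivity))
    rw [Real.norm_eq_abs, abs_of_nonneg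
      (mul_nonneg (mul_nonneg (by positivity) (Real.exp_nonneg _)) (g_nonneg v s x)), h1]
    have hGn : 0 ≤ lam / 2 * g v x s := mul_nonneg (by positivity) (g_nonneg v x s)
    calc lam / 2 * Real.exp (-(lam * |s|)) * g v x s
        = (lam / 2 * g v x s) * Real.exp (-(lam * |s|)) := by ring
      _ ≤ (lam / 2 * g v x s) * 1 := mul_le_mul_of_nonneg_left hexp hGn
      _ = lam / 2 * g v x s := mul_one _

lemma mul_q_g_integrableOn_halves (hlam : 0 < lam) (hv : 0 < v) (x : ℝ) (S : Set ℝ) :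
    IntegrableOn (fun s => s * (lam / 2 * Real.exp (-(lam * |s|)) * g v s x)) S := by
  apply IntegrableOn.mono_set (t := univ) _ (subset_univ S)
  rw [integrableOn_univ]
  have hb : Integrable (fun s => lam / 2 * |s * g v x s|) :=
    ((integrable_id_g hv x).abs.const_mul _)
  refine hb.mono' ?_ (Eventually.of_forall fun s => ?_)
  · apply Continuous.aestronglyMeasurable
    have : Continuous fun s : ℝ => g v s x := by unfold g; fun_prop
    fun_prop
  · have h1 : g v s x = g v x s := g_symm v s x
    have hexp : Real.exp (-(lam * |s|)) ≤ 1 := by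
      rw [← Real.exp_zero]
      exact Real.exp_le_exp.mpr (neg_nonpos.mpr (by positivity))
    have h0 : |g v x s| = g v x s := abs_of_nonneg (g_nonneg v x s)
    have h2 : |lam / 2 * Real.exp (-(lam * |s|)) * g v s x| ≤ lam / 2 * g v x s := by
      rw [abs_of_nonneg
        (mul_nonneg (mul_nonneg (by positivity) (Real.exp_nonneg _)) (g_nonneg v s x)), h1]
      have hGn : 0 ≤ lam / 2 * g v x s := mul_nonneg (by positivity) (g_nonneg v x s)
      calc lam / 2 * Real.exp (-(lam * |s|)) * g v x s
          = (lam / 2 * g v x s) * Real.exp (-(lam * |s|)) := by ring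
        _ ≤ (lam / 2 * g v x s) * 1 := mul_le_mul_of_nonneg_left hexp hGn
        _ = lam / 2 * g v x s := mul_one _
    rw [Real.norm_eq_abs, abs_mul]
    calc |s| * |lam / 2 * Real.exp (-(lam * |s|)) * g v s x|
        ≤ |s| * (lam / 2 * g v x s) := mul_le_mul_of_nonneg_left h2 (abs_nonneg s)
      _ = lam / 2 * |s * g v x s| := by rw [abs_mul, h0]; ring

/-- The Laplace–Gaussian density as an actual convolution integral. -/
lemma rep (hlam : 0 < lam) (hv : 0 < v) (x : ℝ) :
    ∫ s, lam / 2 * Real.exp (-(lam * |s|)) * g v s x = laplaceGaussDensity lam v x := by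
  set f : ℝ → ℝ := fun s => lam / 2 * Real.exp (-(lam * |s|)) * g v s x with hf
  rw [← intervalIntegral.integral_Iic_add_Ioi (b := (0:ℝ))
    (q_g_integrableOn_halves hlam hv x _) (q_g_integrableOn_halves hlam hv x _)]
  have hIic : ∫ s in Iic (0:ℝ), f s
      = lam / 2 * (Real.exp (lam ^ 2 * v / 2 + lam * x)
          * gaussQ ((lam * v + x) / Real.sqrt v)) := by
    have h1 : ∫ s in Iic (0:ℝ), f s = ∫ s in Ioi (0:ℝ), f (-s) := by
      rw [integral_comp_neg_Ioi, neg_zero]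
    rw [h1]
    have h2 : ∀ s ∈ Ioi (0:ℝ), f (-s)
        = lam / 2 * (Real.exp (-(lam * s)) * g v (-x) s) := by
      intro s hs
      rw [hf]
      simp only [abs_neg, abs_of_pos hs.out]
      rw [show g v (-s) x = g v (-x) s by unfold g; ring_nf]
      ring
    rw [setIntegral_congr_fun measurableSet_Ioi h2, integral_const_mul, L0 hv lam (-x)]
    rw [show lam ^ 2 * v / 2 - lam * -x = lam ^ 2 * v / 2 + lam * x by ring,
      show lam * v - -x = lam * v + x by ring]
  have hIoi : ∫ s in Ioi (0:ℝ), f s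
      = lam / 2 * (Real.exp (lam ^ 2 * v / 2 - lam * x)
          * gaussQ ((lam * v - x) / Real.sqrt v)) := by
    have h2 : ∀ s ∈ Ioi (0:ℝ), f s = lam / 2 * (Real.exp (-(lam * s)) * g v x s) := by
      intro s hs
      rw [hf]
      simp only [abs_of_pos hs.out]
      rw [g_symm v s x]; ring
    rw [setIntegral_congr_fun measurableSet_Ioi h2, integral_const_mul, L0 hv lam x]
  rw [hIic, hIoi, laplaceGaussDensity]
  have h3 : 1 - gaussQ ((x - lam * v) / Real.sqrt v) = gaussQ ((lam * v - x) / Real.sqrt v) := by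
    have := gaussQ_neg_add ((x - lam * v) / Real.sqrt v)
    rw [show -((x - lam * v) / Real.sqrt v) = (lam * v - x) / Real.sqrt v by ring] at this
    linarith
  rw [h3, show (x + lam * v) = (lam * v + x) from add_comm _ _, Real.exp_add,
    show lam ^ 2 * v / 2 - lam * x = lam ^ 2 * v / 2 + -(lam * x) by ring, Real.exp_add,
    show -lam * x = -(lam * x) by ring]
  ring

/-- First moment against the Laplace weight. -/
lemma repM (hlam : 0 < lam) (hv : 0 < v) (x : ℝ) :
    ∫ s, s * (lam / 2 * Real.exp (-(lam * |s|)) * g v s x)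
      = lam / 2 * (Real.exp (lam ^ 2 * v / 2 - lam * x)
            * ((x - lam * v) * gaussQ ((lam * v - x) / Real.sqrt v))
          + Real.exp (lam ^ 2 * v / 2 + lam * x)
            * ((x + lam * v) * gaussQ ((lam * v + x) / Real.sqrt v))) := by
  set f : ℝ → ℝ := fun s => s * (lam / 2 * Real.exp (-(lam * |s|)) * g v s x) with hf
  rw [← intervalIntegral.integral_Iic_add_Ioi (b := (0:ℝ))
    (mul_q_g_integrableOn_halves hlam hv x _) (mul_q_g_integrableOn_halves hlam hv x _)]
  have hIoi : ∫ s in Ioi (0:ℝ), f s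
      = lam / 2 * (Real.exp (lam ^ 2 * v / 2 - lam * x)
          * ((x - lam * v) * gaussQ ((lam * v - x) / Real.sqrt v)) + v * g v x 0) := by
    have h2 : ∀ s ∈ Ioi (0:ℝ), f s
        = lam / 2 * (s * (Real.exp (-(lam * s)) * g v x s)) := by
      intro s hs
      rw [hf]
      simp only [abs_of_pos hs.out]
      rw [g_symm v s x]
      ring
    rw [setIntegral_congr_fun measurableSet_Ioi h2, integral_const_mul, L1 hv lam x]
  have hIic : ∫ s in Iic (0:ℝ), f s
      = lam / 2 * (Real.exp (lam ^ 2 * v / 2 + lam * x)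
          * ((x + lam * v) * gaussQ ((lam * v + x) / Real.sqrt v)) - v * g v x 0) := by
    have h1 : ∫ s in Iic (0:ℝ), f s = ∫ s in Ioi (0:ℝ), f (-s) := by
      rw [integral_comp_neg_Ioi, neg_zero]
    rw [h1]
    have h2 : ∀ s ∈ Ioi (0:ℝ), f (-s)
        = -(lam / 2) * (s * (Real.exp (-(lam * s)) * g v (-x) s)) := by
      intro s hs
      rw [hf]
      simp only [abs_neg, abs_of_pos hs.out]
      rw [show g v (-s) x = g v (-x) s by unfold g; ring_nf]
      ring
    rw [setIntegral_congr_fun measurableSet_Ioi h2, integral_const_mul, L1 hv lam (-x)]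
    rw [show lam ^ 2 * v / 2 - lam * -x = lam ^ 2 * v / 2 + lam * x by ring,
      show lam * v - -x = lam * v + x by ring,
      show g v (-x) 0 = g v x 0 by unfold g; ring_nf]
    ring
  rw [hIic, hIoi]
  ring

end PMLG4

namespace PMLG5
open PMLG PMLG2 PMLG3 PMLG4

lemma g_le {σ : ℝ} (hσ : 0 < σ) (m x : ℝ) : g σ m x ≤ (Real.sqrt (2 * π * σ))⁻¹ := by
  unfold g
  have h : Real.exp (-(x - m) ^ 2 / (2 * σ)) ≤ 1 := by
    rw [← Real.exp_zero]
    apply Real.exp_le_exp.mpr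
    apply div_nonpos_of_nonpos_of_nonneg (neg_nonpos.mpr (sq_nonneg _)) (by positivity)
  calc (Real.sqrt (2 * π * σ))⁻¹ * Real.exp (-(x - m) ^ 2 / (2 * σ))
      ≤ (Real.sqrt (2 * π * σ))⁻¹ * 1 := by
        apply mul_le_mul_of_nonneg_left h (by positivity)
    _ = _ := mul_one _

lemma g_mul_g {NT τ : ℝ} (hNT : 0 < NT) (hτ : 0 < τ) (s z x : ℝ) :
    g NT s x * g τ z x
      = g (NT + τ) z s * g (NT * τ / (NT + τ)) ((τ * s + NT * z) / (NT + τ)) x := by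
  have hσ : (0:ℝ) < NT + τ := by linarith
  have hc : (Real.sqrt (2*π*NT))⁻¹ * (Real.sqrt (2*π*τ))⁻¹
      = (Real.sqrt (2*π*(NT+τ)))⁻¹ * (Real.sqrt (2*π*(NT*τ/(NT+τ))))⁻¹ := by
    rw [← mul_inv, ← mul_inv, ← Real.sqrt_mul (by positivity), ← Real.sqrt_mul (by positivity)]
    congr 2
    field_simp
  have he : Real.exp (-(x - s) ^ 2 / (2 * NT)) * Real.exp (-(x - z) ^ 2 / (2 * τ))
      = Real.exp (-(s - z) ^ 2 / (2 * (NT + τ)))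
        * Real.exp (-(x - (τ * s + NT * z) / (NT + τ)) ^ 2 / (2 * (NT * τ / (NT + τ)))) := by
    rw [← Real.exp_add, ← Real.exp_add]
    congr 1
    field_simp
    ring
  unfold g
  calc (Real.sqrt (2*π*NT))⁻¹ * Real.exp (-(x - s) ^ 2 / (2 * NT))
        * ((Real.sqrt (2*π*τ))⁻¹ * Real.exp (-(x - z) ^ 2 / (2 * τ)))
      = ((Real.sqrt (2*π*NT))⁻¹ * (Real.sqrt (2*π*τ))⁻¹)
        * (Real.exp (-(x - s) ^ 2 / (2 * NT)) * Real.exp (-(x - z) ^ 2 / (2 * τ))) := by ring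
    _ = ((Real.sqrt (2*π*(NT+τ)))⁻¹ * (Real.sqrt (2*π*(NT*τ/(NT+τ))))⁻¹)
        * (Real.exp (-(s - z) ^ 2 / (2 * (NT + τ)))
          * Real.exp (-(x - (τ * s + NT * z) / (NT + τ)) ^ 2 / (2 * (NT * τ / (NT + τ))))) := by
        rw [hc, he]
    _ = _ := by ring

lemma conv_g {NT τ : ℝ} (hNT : 0 < NT) (hτ : 0 < τ) (s z : ℝ) :
    ∫ x, g NT s x * g τ z x = g (NT + τ) z s := by
  have hvv : (0:ℝ) < NT * τ / (NT + τ) := by positivity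
  simp only [g_mul_g hNT hτ s z]
  rw [integral_const_mul, integral_g hvv, mul_one]

lemma conv_id_g {NT τ : ℝ} (hNT : 0 < NT) (hτ : 0 < τ) (s z : ℝ) :
    ∫ x, x * (g NT s x * g τ z x) = (τ * s + NT * z) / (NT + τ) * g (NT + τ) z s := by
  have hvv : (0:ℝ) < NT * τ / (NT + τ) := by positivity
  simp only [g_mul_g hNT hτ s z]
  have : ∀ x : ℝ, x * (g (NT + τ) z s * g (NT * τ / (NT + τ)) ((τ * s + NT * z) / (NT + τ)) x)
      = g (NT + τ) z s * (x * g (NT * τ / (NT + τ)) ((τ * s + NT * z) / (NT + τ)) x) := by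
    intro x; ring
  simp only [this]
  rw [integral_const_mul, integral_id_g hvv]
  ring

lemma integrable_exp_neg_abs {lam : ℝ} (hlam : 0 < lam) :
    Integrable (fun s : ℝ => Real.exp (-(lam * |s|))) := by
  have h1 : IntegrableOn (fun s : ℝ => Real.exp (-(lam * |s|))) (Ioi 0) := by
    refine (exp_neg_integrableOn_Ioi 0 hlam).congr_fun (fun s hs => ?_) measurableSet_Ioi
    rw [abs_of_pos hs.out]; simp only [neg_mul]
  have h2 : IntegrableOn (fun s : ℝ => Real.exp (-(lam * |s|))) (Iic 0) := by
    rw [← Measure.map_neg_eq_self (volume : Measure ℝ)]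
    have m : MeasurableEmbedding fun x : ℝ => -x := (Homeomorph.neg ℝ).measurableEmbedding
    rw [m.integrableOn_map_iff]
    simp_rw [Function.comp_def, abs_neg, neg_preimage, neg_Iic, neg_zero]
    exact Iff.mpr integrableOn_Ici_iff_integrableOn_Ioi h1
  rw [← integrableOn_univ, ← Iic_union_Ioi (a := (0:ℝ))]
  exact h2.union h1

lemma integrable_of_prod_bound {f : ℝ × ℝ → ℝ} {U W : ℝ → ℝ}
    (hf : AEStronglyMeasurable f (volume.prod volume))
    (hU : Integrable U) (hW : Integrable W) (hUn : ∀ s, 0 ≤ U s) (hWn : ∀ x, 0 ≤ W x)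
    (hb : ∀ p, ‖f p‖ ≤ U p.1 * W p.2) :
    Integrable f (volume.prod volume) := by
  refine ⟨hf, ?_⟩
  rw [hasFiniteIntegral_iff_norm]
  calc ∫⁻ p, ENNReal.ofReal ‖f p‖ ∂(volume.prod volume)
      ≤ ∫⁻ p : ℝ × ℝ, ENNReal.ofReal (U p.1) * ENNReal.ofReal (W p.2)
          ∂(volume.prod volume) := by
        refine lintegral_mono fun p => ?_
        calc ENNReal.ofReal ‖f p‖
            ≤ ENNReal.ofReal (U p.1 * W p.2) := ENNReal.ofReal_le_ofReal (hb p)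
          _ = _ := ENNReal.ofReal_mul (hUn p.1)
    _ = (∫⁻ s, ENNReal.ofReal (U s)) * ∫⁻ x, ENNReal.ofReal (W x) :=
        lintegral_prod_mul (hU.aestronglyMeasurable.aemeasurable.ennreal_ofReal)
          (hW.aestronglyMeasurable.aemeasurable.ennreal_ofReal)
    _ < ⊤ := by
        rw [← ofReal_integral_eq_lintegral_ofReal hU (Eventually.of_forall hUn),
          ← ofReal_integral_eq_lintegral_ofReal hW (Eventually.of_forall hWn)]
        exact ENNReal.mul_lt_top ENNReal.ofReal_lt_top ENNReal.ofReal_lt_top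

end PMLG5

namespace PMLG6
open PMLG PMLG2 PMLG3 PMLG4 PMLG5

variable {lam NT τ : ℝ}

lemma denom_swap (hlam : 0 < lam) (hNT : 0 < NT) (hτ : 0 < τ) (z : ℝ) :
    ∫ x, laplaceGaussDensity lam NT x * g τ z x = laplaceGaussDensity lam (NT + τ) z := by
  have hσ : (0:ℝ) < NT + τ := by linarith
  set F : ℝ → ℝ → ℝ :=
    fun x s => lam / 2 * Real.exp (-(lam * |s|)) * g NT s x * g τ z x with hF
  have hcont : Continuous (Function.uncurry F) := by
    simp only [hF, Function.uncurry]
    unfold g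
    fun_prop
  have hint : Integrable (Function.uncurry F) (volume.prod volume) := by
    refine integrable_of_prod_bound hcont.aestronglyMeasurable
      ((integrable_g hτ z).const_mul (Real.sqrt (2 * π * NT))⁻¹)
      ((integrable_exp_neg_abs hlam).const_mul (lam / 2))
      (fun x => mul_nonneg (by positivity) (g_nonneg τ z x))
      (fun s => mul_nonneg (by positivity) (Real.exp_nonneg _))
      (fun p => ?_)
    simp only [hF, Function.uncurry]
    rw [Real.norm_eq_abs, abs_of_nonneg (by
      exact mul_nonneg (mul_nonneg (mul_nonneg (by positivity) (Real.exp_nonneg _))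
        (g_nonneg NT p.2 p.1)) (g_nonneg τ z p.1))]
    calc lam / 2 * Real.exp (-(lam * |p.2|)) * g NT p.2 p.1 * g τ z p.1
        ≤ lam / 2 * Real.exp (-(lam * |p.2|)) * (Real.sqrt (2 * π * NT))⁻¹ * g τ z p.1 := by
          apply mul_le_mul_of_nonneg_right _ (g_nonneg τ z p.1)
          apply mul_le_mul_of_nonneg_left (g_le hNT p.2 p.1)
            (mul_nonneg (by positivity) (Real.exp_nonneg _))
      _ = (Real.sqrt (2 * π * NT))⁻¹ * g τ z p.1 * (lam / 2 * Real.exp (-(lam * |p.2|))) := by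
          ring
  have step1 : ∫ x, laplaceGaussDensity lam NT x * g τ z x = ∫ x, ∫ s, F x s := by
    congr 1
    ext x
    rw [← rep hlam hNT x, ← integral_mul_const]
  rw [step1, integral_integral_swap hint]
  have step2 : ∀ s : ℝ, (∫ x, F x s)
      = lam / 2 * Real.exp (-(lam * |s|)) * g (NT + τ) s z := by
    intro s
    simp only [hF]
    have : ∀ x : ℝ, lam / 2 * Real.exp (-(lam * |s|)) * g NT s x * g τ z x
        = lam / 2 * Real.exp (-(lam * |s|)) * (g NT s x * g τ z x) := fun x => by ring
    simp only [this]
    rw [integral_const_mul, conv_g hNT hτ s z, g_symm]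
  simp only [step2]
  exact rep hlam hσ z

lemma numer_swap (hlam : 0 < lam) (hNT : 0 < NT) (hτ : 0 < τ) (z : ℝ) :
    ∫ x, x * laplaceGaussDensity lam NT x * g τ z x
      = NT * z / (NT + τ) * laplaceGaussDensity lam (NT + τ) z
        + τ / (NT + τ) *
          (lam / 2 * (Real.exp (lam ^ 2 * (NT + τ) / 2 - lam * z)
              * ((z - lam * (NT + τ)) * gaussQ ((lam * (NT + τ) - z) / Real.sqrt (NT + τ)))
            + Real.exp (lam ^ 2 * (NT + τ) / 2 + lam * z)
              * ((z + lam * (NT + τ)) * gaussQ ((lam * (NT + τ) + z) / Real.sqrt (NT + τ))))) := by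
  have hσ : (0:ℝ) < NT + τ := by linarith
  set F : ℝ → ℝ → ℝ :=
    fun x s => x * (lam / 2 * Real.exp (-(lam * |s|)) * g NT s x * g τ z x) with hF
  have hcont : Continuous (Function.uncurry F) := by
    simp only [hF, Function.uncurry]
    unfold g
    fun_prop
  have hint : Integrable (Function.uncurry F) (volume.prod volume) := by
    refine integrable_of_prod_bound hcont.aestronglyMeasurable
      (((integrable_id_g hτ z).abs).const_mul (Real.sqrt (2 * π * NT))⁻¹)
      ((integrable_exp_neg_abs hlam).const_mul (lam / 2))
      (fun x => mul_nonneg (by positivity) (abs_nonneg _))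
      (fun s => mul_nonneg (by positivity) (Real.exp_nonneg _))
      (fun p => ?_)
    simp only [hF, Function.uncurry]
    have habs : |lam / 2 * Real.exp (-(lam * |p.2|)) * g NT p.2 p.1 * g τ z p.1|
        = lam / 2 * Real.exp (-(lam * |p.2|)) * g NT p.2 p.1 * g τ z p.1 :=
      abs_of_nonneg (mul_nonneg (mul_nonneg (mul_nonneg (by positivity)
        (Real.exp_nonneg _)) (g_nonneg NT p.2 p.1)) (g_nonneg τ z p.1))
    rw [Real.norm_eq_abs, abs_mul, habs]
    have h1 : lam / 2 * Real.exp (-(lam * |p.2|)) * g NT p.2 p.1 * g τ z p.1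
        ≤ lam / 2 * Real.exp (-(lam * |p.2|)) * ((Real.sqrt (2 * π * NT))⁻¹ * g τ z p.1) := by
      calc lam / 2 * Real.exp (-(lam * |p.2|)) * g NT p.2 p.1 * g τ z p.1
          ≤ lam / 2 * Real.exp (-(lam * |p.2|)) * (Real.sqrt (2 * π * NT))⁻¹ * g τ z p.1 := by
            apply mul_le_mul_of_nonneg_right _ (g_nonneg τ z p.1)
            apply mul_le_mul_of_nonneg_left (g_le hNT p.2 p.1)
              (mul_nonneg (by positivity) (Real.exp_nonneg _))
        _ = _ := by ring
    calc |p.1| * (lam / 2 * Real.exp (-(lam * |p.2|)) * g NT p.2 p.1 * g τ z p.1)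
        ≤ |p.1| * (lam / 2 * Real.exp (-(lam * |p.2|))
            * ((Real.sqrt (2 * π * NT))⁻¹ * g τ z p.1)) :=
          mul_le_mul_of_nonneg_left h1 (abs_nonneg _)
      _ = (Real.sqrt (2 * π * NT))⁻¹ * (|p.1| * g τ z p.1)
            * (lam / 2 * Real.exp (-(lam * |p.2|))) := by ring
      _ = (Real.sqrt (2 * π * NT))⁻¹ * |p.1 * g τ z p.1|
            * (lam / 2 * Real.exp (-(lam * |p.2|))) := by
          rw [abs_mul, abs_of_nonneg (g_nonneg τ z p.1)]
  have step1 : ∫ x, x * laplaceGaussDensity lam NT x * g τ z x = ∫ x, ∫ s, F x s := by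
    congr 1
    ext x
    rw [show x * laplaceGaussDensity lam NT x * g τ z x
      = x * (laplaceGaussDensity lam NT x * g τ z x) by ring, ← rep hlam hNT x,
      ← integral_mul_const, ← integral_const_mul]
  rw [step1, integral_integral_swap hint]
  have step2 : ∀ s : ℝ, (∫ x, F x s)
      = τ / (NT + τ) * (s * (lam / 2 * Real.exp (-(lam * |s|)) * g (NT + τ) s z))
        + NT * z / (NT + τ) * (lam / 2 * Real.exp (-(lam * |s|)) * g (NT + τ) s z) := by
    intro s
    simp only [hF]
    have : ∀ x : ℝ, x * (lam / 2 * Real.exp (-(lam * |s|)) * g NT s x * g τ z x)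
        = lam / 2 * Real.exp (-(lam * |s|)) * (x * (g NT s x * g τ z x)) := fun x => by ring
    simp only [this]
    rw [integral_const_mul, conv_id_g hNT hτ s z, g_symm (NT + τ) z s]
    field_simp
  simp only [step2]
  have hi1 : Integrable (fun s : ℝ =>
      τ / (NT + τ) * (s * (lam / 2 * Real.exp (-(lam * |s|)) * g (NT + τ) s z))) :=
    (integrableOn_univ.mp (mul_q_g_integrableOn_halves hlam hσ z univ)).const_mul _
  have hi2 : Integrable (fun s : ℝ =>
      NT * z / (NT + τ) * (lam / 2 * Real.exp (-(lam * |s|)) * g (NT + τ) s z)) :=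
    (integrableOn_univ.mp (q_g_integrableOn_halves hlam hσ z univ)).const_mul _
  rw [integral_add hi1 hi2, integral_const_mul, integral_const_mul, rep hlam hσ z,
    repM hlam hσ z]
  ring

end PMLG6

open PMLG PMLG2 PMLG3 PMLG4 PMLG5 PMLG6 in
/-- Closed-form posterior mean of `X` (Laplace signal plus Gaussian input noise of variance
`N_T`) given the observation `ẑ = X + Z` with `Z ∼ N(0, τ)`:
`E[X | X + Z = ẑ] = ẑ + λτ·η(ẑ, τ)`. Here the conditional expectation is expressed as the
ratio of the two defining integrals against the densities. -/
theorem posterior_mean_laplace_gaussian (lam NT τ : ℝ) (hlam : 0 < lam) (hNT : 0 < NT)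
    (hτ : 0 < τ) (zhat : ℝ) :
    (∫ x : ℝ, x * laplaceGaussDensity lam NT x *
        ((Real.sqrt (2 * Real.pi * τ))⁻¹ * Real.exp (-((zhat - x) ^ 2) / (2 * τ))))
      / (∫ x : ℝ, laplaceGaussDensity lam NT x *
        ((Real.sqrt (2 * Real.pi * τ))⁻¹ * Real.exp (-((zhat - x) ^ 2) / (2 * τ))))
    = zhat + lam * τ * etaFun lam NT τ zhat := by
  have hσ : (0:ℝ) < NT + τ := by linarith
  have hker : ∀ x : ℝ, (Real.sqrt (2 * Real.pi * τ))⁻¹ * Real.exp (-((zhat - x) ^ 2) / (2 * τ))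
      = g τ zhat x := by
    intro x
    unfold PMLG.g
    rw [show (x - zhat) ^ 2 = (zhat - x) ^ 2 by ring]
  simp only [hker]
  rw [denom_swap hlam hNT hτ zhat, numer_swap hlam hNT hτ zhat]
  -- abbreviations
  set QA := gaussQ ((lam * (NT + τ) + zhat) / Real.sqrt (NT + τ)) with hQA
  set QB := gaussQ ((lam * (NT + τ) - zhat) / Real.sqrt (NT + τ)) with hQB
  set A := Real.exp (lam * zhat) * QA with hA
  set B := Real.exp (-(lam * zhat)) * QB with hB
  set C := lam / 2 * Real.exp (lam ^ 2 * (NT + τ) / 2) with hC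
  have hQApos : 0 < QA := gaussQ_pos _
  have hQBpos : 0 < QB := gaussQ_pos _
  have hApos : 0 < A := mul_pos (Real.exp_pos _) hQApos
  have hBpos : 0 < B := mul_pos (Real.exp_pos _) hQBpos
  have hABne : A + B ≠ 0 := ne_of_gt (by linarith)
  have hCpos : 0 < C := by rw [hC]; positivity
  -- closed form of the denominator
  have hD : laplaceGaussDensity lam (NT + τ) zhat = C * (A + B) := by
    rw [laplaceGaussDensity]
    have h1 : 1 - gaussQ ((zhat - lam * (NT + τ)) / Real.sqrt (NT + τ)) = QB := by
      have h2 := gaussQ_neg_add ((zhat - lam * (NT + τ)) / Real.sqrt (NT + τ))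
      rw [show -((zhat - lam * (NT + τ)) / Real.sqrt (NT + τ))
        = (lam * (NT + τ) - zhat) / Real.sqrt (NT + τ) by rw [← neg_div]; ring_nf] at h2
      rw [hQB]
      linarith
    rw [h1, show (zhat + lam * (NT + τ)) = (lam * (NT + τ) + zhat) from add_comm _ _, ← hQA,
      show -lam * zhat = -(lam * zhat) by ring]
  -- closed form of the first-moment piece
  have hM : lam / 2 * (Real.exp (lam ^ 2 * (NT + τ) / 2 - lam * zhat)
        * ((zhat - lam * (NT + τ)) * QB)
      + Real.exp (lam ^ 2 * (NT + τ) / 2 + lam * zhat)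
        * ((zhat + lam * (NT + τ)) * QA))
      = C * (zhat * (A + B) + lam * (NT + τ) * (A - B)) := by
    rw [show lam ^ 2 * (NT + τ) / 2 - lam * zhat
      = lam ^ 2 * (NT + τ) / 2 + -(lam * zhat) by ring, Real.exp_add, Real.exp_add]
    rw [hA, hB, hC]
    ring
  rw [hM, hD]
  -- the numerator equals D * zhat + lam*τ*C*(A - B)
  have hNum : NT * zhat / (NT + τ) * (C * (A + B))
        + τ / (NT + τ) * (C * (zhat * (A + B) + lam * (NT + τ) * (A - B)))
      = C * (A + B) * zhat + lam * τ * (C * (A - B)) := by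
    field_simp
    ring
  rw [hNum]
  -- identify etaFun
  have hsq2 : Real.sqrt (2 * (NT + τ)) = Real.sqrt 2 * Real.sqrt (NT + τ) :=
    Real.sqrt_mul (by norm_num) _
  have hs2 : (0:ℝ) < Real.sqrt 2 := Real.sqrt_pos.mpr (by norm_num)
  have hssig : (0:ℝ) < Real.sqrt (NT + τ) := Real.sqrt_pos.mpr hσ
  have hexpand : ∀ u : ℝ, u ^ 2 / (2 * (NT + τ)) = u ^ 2 / (2 * (NT + τ)) := fun u => rfl
  have hAe : erfcx ((zhat + lam * (NT + τ)) / Real.sqrt (2 * (NT + τ)))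
      = 2 * Real.exp (zhat ^ 2 / (2 * (NT + τ)) + lam ^ 2 * (NT + τ) / 2) * A := by
    rw [erfcx, erfc]
    have harg : Real.sqrt 2 * ((zhat + lam * (NT + τ)) / Real.sqrt (2 * (NT + τ)))
        = (lam * (NT + τ) + zhat) / Real.sqrt (NT + τ) := by
      rw [hsq2]
      field_simp
      ring
    have hsq : ((zhat + lam * (NT + τ)) / Real.sqrt (2 * (NT + τ))) ^ 2
        = (zhat + lam * (NT + τ)) ^ 2 / (2 * (NT + τ)) := by
      rw [div_pow, Real.sq_sqrt (by positivity)]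
    rw [harg, hsq, ← hQA, hA]
    rw [show (zhat + lam * (NT + τ)) ^ 2 / (2 * (NT + τ))
      = zhat ^ 2 / (2 * (NT + τ)) + lam ^ 2 * (NT + τ) / 2 + lam * zhat by
        field_simp; ring]
    rw [Real.exp_add]
    ring
  have hBe : erfcx ((-zhat + lam * (NT + τ)) / Real.sqrt (2 * (NT + τ)))
      = 2 * Real.exp (zhat ^ 2 / (2 * (NT + τ)) + lam ^ 2 * (NT + τ) / 2) * B := by
    rw [erfcx, erfc]
    have harg : Real.sqrt 2 * ((-zhat + lam * (NT + τ)) / Real.sqrt (2 * (NT + τ)))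
        = (lam * (NT + τ) - zhat) / Real.sqrt (NT + τ) := by
      rw [hsq2]
      field_simp
      ring
    have hsq : ((-zhat + lam * (NT + τ)) / Real.sqrt (2 * (NT + τ))) ^ 2
        = (-zhat + lam * (NT + τ)) ^ 2 / (2 * (NT + τ)) := by
      rw [div_pow, Real.sq_sqrt (by positivity)]
    rw [harg, hsq, ← hQB, hB]
    rw [show (-zhat + lam * (NT + τ)) ^ 2 / (2 * (NT + τ))
      = zhat ^ 2 / (2 * (NT + τ)) + lam ^ 2 * (NT + τ) / 2 + -(lam * zhat) by
        field_simp; ring]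
    rw [Real.exp_add]
    ring
  have heta : etaFun lam NT τ zhat = (A - B) / (A + B) := by
    rw [etaFun, hAe, hBe]
    set k := 2 * Real.exp (zhat ^ 2 / (2 * (NT + τ)) + lam ^ 2 * (NT + τ) / 2) with hk
    have hkpos : 0 < k := by rw [hk]; positivity
    rw [show k * A - k * B = k * (A - B) by ring, show k * A + k * B = k * (A + B) by ring,
      mul_div_mul_left _ _ (ne_of_gt hkpos)]
  rw [heta]
  rw [show C * (A + B) * zhat + lam * τ * (C * (A - B))
    = C * (A + B) * (zhat + lam * τ * ((A - B) / (A + B))) by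
      field_simp]
  exact mul_div_cancel_left₀ _ (by positivity : C * (A + B) ≠ 0)
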